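/- The sublattice of simultaneous fixed vectors {x ∈ ℤ¹⁰ : g₁x = x and g₂x = x} is exactly the ℤ-span of the two vectors f and t; in particular the ℤ₃×ℤ₃-invariant homology of the dP₉ surface is free of rank 2 with basis {f, t}. -/

import Mathlib

open Matrix

/-- The generator `g₁` of the ℤ₃×ℤ₃ action on the degree-2 homology lattice of the
ℤ₃×ℤ₃-symmetric dP₉ surface, in the basis (σ, f, θ₁₁, θ₂₁, θ₃₁, θ₃₂, θ₄₁, θ₄₂, μ, ν). -/
def g1mat : Matrix (Fin 10) (Fin 10) ℤ :=
  !![0,0,0,3,0,0,0,0,-1,-1;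
     0,1,0,3,0,1,0,1,-1,-1;
     0,0,1,0,0,0,0,0,0,0;
     0,0,0,-2,0,0,0,0,1,0;
     0,0,0,-2,0,-1,0,0,1,1;
     0,0,0,-1,1,-1,0,0,0,1;
     0,0,0,-2,0,0,0,-1,1,1;
     0,0,0,-1,0,0,1,-1,0,0;
     1,0,0,-3,0,0,0,0,2,1;
     0,0,0,0,0,0,0,0,0,1]

/-- The generator `g₂` of the ℤ₃×ℤ₃ action. -/
def g2mat : Matrix (Fin 10) (Fin 10) ℤ :=
  !![0,0,3,0,0,0,0,0,-1,-1;
     0,1,3,0,1,0,0,1,-1,-1;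
     0,0,-2,0,0,0,0,0,0,1;
     0,0,0,1,0,0,0,0,0,0;
     0,0,-1,0,-1,1,0,0,1,0;
     0,0,-2,0,-1,0,0,0,1,1;
     0,0,-2,0,0,0,0,-1,1,1;
     0,0,-1,0,0,0,1,-1,0,0;
     0,0,0,0,0,0,0,0,1,0;
     1,0,-3,0,0,0,0,0,1,2]

/-- The fiber class `f`. -/
def fvec : Fin 10 → ℤ := ![0,1,0,0,0,0,0,0,0,0]

/-- The class `t`, pull-back of the hyperplane class. -/
def tvec : Fin 10 → ℤ := ![-3,-3,1,1,2,2,3,1,3,3]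

set_option maxHeartbeats 1000000 in
/-- The sublattice of simultaneous fixed vectors of `g₁` and `g₂` in ℤ¹⁰ is exactly the
ℤ-span of `f` and `t`; in particular the ℤ₃×ℤ₃-invariant homology of the dP₉ surface is
free of rank 2 with basis `{f, t}`. -/
theorem invariant_homology_dP9 :
    {x : Fin 10 → ℤ | g1mat.mulVec x = x ∧ g2mat.mulVec x = x}
      = ↑(Submodule.span ℤ ({fvec, tvec} : Set (Fin 10 → ℤ))) ∧
    LinearIndependent ℤ ![fvec, tvec] := by
  constructor
  · ext x
    simp only [Set.mem_setOf_eq, SetLike.mem_coe]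
    constructor
    · rintro ⟨h1, h2⟩
      have hx : x = ![x 0, x 1, x 2, x 3, x 4, x 5, x 6, x 7, x 8, x 9] := by
        funext i; fin_cases i <;> rfl
      rw [hx] at h1 h2
      simp only [g1mat, g2mat, cons_mulVec, cons_dotProduct_cons, dotProduct_of_isEmpty,
        empty_mulVec] at h1 h2
      have e1_0 : 0 * x 0 + (0 * x 1 + (0 * x 2 + (3 * x 3 + (0 * x 4 + (0 * x 5 + (0 * x 6 + (0 * x 7 + ((-1) * x 8 + ((-1) * x 9 + (0)))))))))) = x 0 := congrFun h1 0
      have e1_1 : 0 * x 0 + (1 * x 1 + (0 * x 2 + (3 * x 3 + (0 * x 4 + (1 * x 5 + (0 * x 6 + (1 * x 7 + ((-1) * x 8 + ((-1) * x 9 + (0)))))))))) = x 1 := congrFun h1 1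
      have e1_2 : 0 * x 0 + (0 * x 1 + (1 * x 2 + (0 * x 3 + (0 * x 4 + (0 * x 5 + (0 * x 6 + (0 * x 7 + (0 * x 8 + (0 * x 9 + (0)))))))))) = x 2 := congrFun h1 2
      have e1_3 : 0 * x 0 + (0 * x 1 + (0 * x 2 + ((-2) * x 3 + (0 * x 4 + (0 * x 5 + (0 * x 6 + (0 * x 7 + (1 * x 8 + (0 * x 9 + (0)))))))))) = x 3 := congrFun h1 3
      have e1_4 : 0 * x 0 + (0 * x 1 + (0 * x 2 + ((-2) * x 3 + (0 * x 4 + ((-1) * x 5 + (0 * x 6 + (0 * x 7 + (1 * x 8 + (1 * x 9 + (0)))))))))) = x 4 := congrFun h1 4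
      have e1_5 : 0 * x 0 + (0 * x 1 + (0 * x 2 + ((-1) * x 3 + (1 * x 4 + ((-1) * x 5 + (0 * x 6 + (0 * x 7 + (0 * x 8 + (1 * x 9 + (0)))))))))) = x 5 := congrFun h1 5
      have e1_6 : 0 * x 0 + (0 * x 1 + (0 * x 2 + ((-2) * x 3 + (0 * x 4 + (0 * x 5 + (0 * x 6 + ((-1) * x 7 + (1 * x 8 + (1 * x 9 + (0)))))))))) = x 6 := congrFun h1 6
      have e1_7 : 0 * x 0 + (0 * x 1 + (0 * x 2 + ((-1) * x 3 + (0 * x 4 + (0 * x 5 + (1 * x 6 + ((-1) * x 7 + (0 * x 8 + (0 * x 9 + (0)))))))))) = x 7 := congrFun h1 7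
      have e1_8 : 1 * x 0 + (0 * x 1 + (0 * x 2 + ((-3) * x 3 + (0 * x 4 + (0 * x 5 + (0 * x 6 + (0 * x 7 + (2 * x 8 + (1 * x 9 + (0)))))))))) = x 8 := congrFun h1 8
      have e1_9 : 0 * x 0 + (0 * x 1 + (0 * x 2 + (0 * x 3 + (0 * x 4 + (0 * x 5 + (0 * x 6 + (0 * x 7 + (0 * x 8 + (1 * x 9 + (0)))))))))) = x 9 := congrFun h1 9
      have e2_0 : 0 * x 0 + (0 * x 1 + (3 * x 2 + (0 * x 3 + (0 * x 4 + (0 * x 5 + (0 * x 6 + (0 * x 7 + ((-1) * x 8 + ((-1) * x 9 + (0)))))))))) = x 0 := congrFun h2 0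
      have e2_1 : 0 * x 0 + (1 * x 1 + (3 * x 2 + (0 * x 3 + (1 * x 4 + (0 * x 5 + (0 * x 6 + (1 * x 7 + ((-1) * x 8 + ((-1) * x 9 + (0)))))))))) = x 1 := congrFun h2 1
      have e2_2 : 0 * x 0 + (0 * x 1 + ((-2) * x 2 + (0 * x 3 + (0 * x 4 + (0 * x 5 + (0 * x 6 + (0 * x 7 + (0 * x 8 + (1 * x 9 + (0)))))))))) = x 2 := congrFun h2 2
      have e2_3 : 0 * x 0 + (0 * x 1 + (0 * x 2 + (1 * x 3 + (0 * x 4 + (0 * x 5 + (0 * x 6 + (0 * x 7 + (0 * x 8 + (0 * x 9 + (0)))))))))) = x 3 := congrFun h2 3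
      have e2_4 : 0 * x 0 + (0 * x 1 + ((-1) * x 2 + (0 * x 3 + ((-1) * x 4 + (1 * x 5 + (0 * x 6 + (0 * x 7 + (1 * x 8 + (0 * x 9 + (0)))))))))) = x 4 := congrFun h2 4
      have e2_5 : 0 * x 0 + (0 * x 1 + ((-2) * x 2 + (0 * x 3 + ((-1) * x 4 + (0 * x 5 + (0 * x 6 + (0 * x 7 + (1 * x 8 + (1 * x 9 + (0)))))))))) = x 5 := congrFun h2 5
      have e2_6 : 0 * x 0 + (0 * x 1 + ((-2) * x 2 + (0 * x 3 + (0 * x 4 + (0 * x 5 + (0 * x 6 + ((-1) * x 7 + (1 * x 8 + (1 * x 9 + (0)))))))))) = x 6 := congrFun h2 6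
      have e2_7 : 0 * x 0 + (0 * x 1 + ((-1) * x 2 + (0 * x 3 + (0 * x 4 + (0 * x 5 + (1 * x 6 + ((-1) * x 7 + (0 * x 8 + (0 * x 9 + (0)))))))))) = x 7 := congrFun h2 7
      have e2_8 : 0 * x 0 + (0 * x 1 + (0 * x 2 + (0 * x 3 + (0 * x 4 + (0 * x 5 + (0 * x 6 + (0 * x 7 + (1 * x 8 + (0 * x 9 + (0)))))))))) = x 8 := congrFun h2 8
      have e2_9 : 1 * x 0 + (0 * x 1 + ((-3) * x 2 + (0 * x 3 + (0 * x 4 + (0 * x 5 + (0 * x 6 + (0 * x 7 + (1 * x 8 + (2 * x 9 + (0)))))))))) = x 9 := congrFun h2 9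
      rw [Submodule.mem_span_pair]
      refine ⟨x 1 + 3 * x 2, x 2, funext fun i => ?_⟩
      fin_cases i
      · show (x 1 + 3 * x 2) * 0 + x 2 * (-3) = x 0
        omega
      · show (x 1 + 3 * x 2) * 1 + x 2 * (-3) = x 1
        omega
      · show (x 1 + 3 * x 2) * 0 + x 2 * 1 = x 2
        omega
      · show (x 1 + 3 * x 2) * 0 + x 2 * 1 = x 3
        omega
      · show (x 1 + 3 * x 2) * 0 + x 2 * 2 = x 4
        omega
      · show (x 1 + 3 * x 2) * 0 + x 2 * 2 = x 5
        omega
      · show (x 1 + 3 * x 2) * 0 + x 2 * 3 = x 6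
        omega
      · show (x 1 + 3 * x 2) * 0 + x 2 * 1 = x 7
        omega
      · show (x 1 + 3 * x 2) * 0 + x 2 * 3 = x 8
        omega
      · show (x 1 + 3 * x 2) * 0 + x 2 * 3 = x 9
        omega
    · intro h
      induction h using Submodule.span_induction with
      | mem v hv =>
        rcases hv with rfl | rfl <;>
          exact ⟨by funext i; fin_cases i <;> rfl, by funext i; fin_cases i <;> rfl⟩
      | zero => exact ⟨Matrix.mulVec_zero _, Matrix.mulVec_zero _⟩
      | add u v _ _ hu hv =>
        exact ⟨by rw [Matrix.mulVec_add, hu.1, hv.1], by rw [Matrix.mulVec_add, hu.2, hv.2]⟩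
      | smul a u _ hu =>
        exact ⟨by rw [Matrix.mulVec_smul, hu.1], by rw [Matrix.mulVec_smul, hu.2]⟩
  · rw [LinearIndependent.pair_iff]
    intro s t h
    have h1 := congrFun h 1
    have h2 := congrFun h 2
    simp [fvec, tvec] at h1 h2
    omega
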